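/- Let p, q ∈ [1, ∞), k ∈ ℕ, and let f₁, …, f_k ∈ L_p(L_q) be pairwise disjoint, i.e. |f_i| ⊓ |f_j| = 0 in the lattice order of L_p(L_q) for all i ≠ j. Then there exists a surjective linear isometry U : L_p(L_q) → L_p(L_q) such that U(f_i) ≥ 0 for every i = 1, …, k. -/

import Mathlib

noncomputable section

open MeasureTheory ENNReal

/-- The unit interval `[0,1]` as a measure space (with Lebesgue measure). -/
abbrev I01 : Type := Set.Icc (0:ℝ) 1

/-- `L_q([0,1])`. -/
abbrev LqSp (q : ℝ≥0∞) : Type := MeasureTheory.Lp ℝ q (volume : Measure I01)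

/-- The Bochner space `L_p([0,1]; L_q([0,1]))`, with its Banach lattice
structure. -/
abbrev LpLqSp (p q : ℝ≥0∞) [Fact (1 ≤ q)] : Type :=
  MeasureTheory.Lp (LqSp q) p (volume : Measure I01)

set_option linter.unusedSectionVars false
set_option maxHeartbeats 1000000
namespace DTN

open Filter Topology

variable {α : Type*} [MeasurableSpace α] {μ : Measure α} {q : ℝ≥0∞} [Fact (1 ≤ q)]

lemma fact_ne_zero (q : ℝ≥0∞) [hq : Fact (1 ≤ q)] : q ≠ 0 :=
  (lt_of_lt_of_le zero_lt_one hq.out).ne'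

/-- coeFn of a finite sum in Lp. -/
lemma coeFn_sum {E : Type*} [NormedAddCommGroup E] {p : ℝ≥0∞} {ι : Type*} (s : Finset ι)
    (g : ι → Lp E p μ) : ⇑(∑ j ∈ s, g j) =ᵐ[μ] fun t => ∑ j ∈ s, g j t := by
  classical
  induction s using Finset.induction_on with
  | empty => simp only [Finset.sum_empty]; exact Lp.coeFn_zero E p μ
  | insert a s hj ih =>
    rw [Finset.sum_insert hj]
    filter_upwards [Lp.coeFn_add (g a) (∑ j ∈ s, g j), ih] with t h1 h2
    rw [h1, Pi.add_apply, h2, Finset.sum_insert hj]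

/-- sign function: `1` where `g = 0`, `-1` elsewhere. -/
def sgnFun (g : α → ℝ) (t : α) : ℝ := if g t = 0 then 1 else -1

lemma abs_sgnFun (g : α → ℝ) (t : α) : |sgnFun g t| = 1 := by
  unfold sgnFun; split <;> simp

def Vfun (g φ : α → ℝ) : α → ℝ := fun t => sgnFun g t * φ t

lemma norm_Vfun_apply (g φ : α → ℝ) (t : α) : ‖Vfun g φ t‖ = ‖φ t‖ := by
  simp only [Vfun, Real.norm_eq_abs, abs_mul, abs_sgnFun, one_mul]

lemma measurable_sgnFun {g : α → ℝ} (hg : Measurable g) : Measurable (sgnFun g) :=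
  Measurable.ite (hg (measurableSet_singleton 0)) measurable_const measurable_const

lemma memℒp_Vfun (g φ : Lp ℝ q μ) : MemLp (Vfun g φ) q μ := by
  refine (Lp.memLp φ).of_le ?_ (Eventually.of_forall fun t => (norm_Vfun_apply _ _ t).le)
  exact ((measurable_sgnFun (Lp.stronglyMeasurable g).measurable).mul
    (Lp.stronglyMeasurable φ).measurable).aestronglyMeasurable

/-- Multiplication by the sign of `g` as a map `Lq → Lq`. -/
def Vlp (g φ : Lp ℝ q μ) : Lp ℝ q μ := (memℒp_Vfun g φ).toLp _

lemma coeFn_Vlp (g φ : Lp ℝ q μ) : ⇑(Vlp g φ) =ᵐ[μ] Vfun g φ :=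
  MemLp.coeFn_toLp _

lemma Vlp_add (g φ ψ : Lp ℝ q μ) : Vlp g (φ + ψ) = Vlp g φ + Vlp g ψ := by
  refine Lp.ext ?_
  filter_upwards [Lp.coeFn_add φ ψ, coeFn_Vlp g (φ + ψ), coeFn_Vlp g φ, coeFn_Vlp g ψ,
    Lp.coeFn_add (Vlp g φ) (Vlp g ψ)] with t h0 h1 h2 h3 h4
  rw [h1, h4, Pi.add_apply, h2, h3]
  simp only [Vfun]; rw [h0, Pi.add_apply]; ring

lemma Vlp_smul (g : Lp ℝ q μ) (c : ℝ) (φ : Lp ℝ q μ) : Vlp g (c • φ) = c • Vlp g φ := by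
  refine Lp.ext ?_
  filter_upwards [Lp.coeFn_smul c φ, coeFn_Vlp g (c • φ), coeFn_Vlp g φ,
    Lp.coeFn_smul c (Vlp g φ)] with t h0 h1 h2 h3
  rw [h1, h3, Pi.smul_apply, h2]
  simp only [Vfun]; rw [h0, Pi.smul_apply]
  simp only [smul_eq_mul]; ring

lemma norm_Vlp (g φ : Lp ℝ q μ) : ‖Vlp g φ‖ = ‖φ‖ := by
  rw [Vlp, Lp.norm_toLp, Lp.norm_def]
  congr 1
  exact eLpNorm_congr_norm_ae (Eventually.of_forall fun t => norm_Vfun_apply g φ t)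

lemma Vlp_invol (g φ : Lp ℝ q μ) : Vlp g (Vlp g φ) = φ := by
  refine Lp.ext ?_
  filter_upwards [coeFn_Vlp g (Vlp g φ), coeFn_Vlp g φ] with t h1 h2
  rw [h1]
  simp only [Vfun]; rw [h2]
  simp only [Vfun]
  unfold sgnFun; split <;> ring


/-- The crucial positivity property of `Vlp`. -/
lemma Vlp_nonneg_of {k : ℕ} (φ : Fin k → Lp ℝ q μ) (i : Fin k)
    (hd : ∀ j, j ≠ i → |φ i| ⊓ |φ j| = 0) :
    0 ≤ Vlp (∑ j : Fin k, ((-(φ j)) ⊔ 0)) (φ i) := by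
  classical
  set g : Lp ℝ q μ := ∑ j : Fin k, ((-(φ j)) ⊔ 0) with hg
  rw [← Lp.coeFn_nonneg]
  have h1 : ⇑g =ᵐ[μ] fun t => ∑ j : Fin k, ((-(φ j)) ⊔ 0) t :=
    coeFn_sum Finset.univ fun j => (-(φ j)) ⊔ 0
  have h2 : ∀ᵐ t ∂μ, ∀ j : Fin k, ((-(φ j)) ⊔ 0) t = max (-(φ j t)) 0 := by
    rw [ae_all_iff]
    intro j
    filter_upwards [Lp.coeFn_sup (-(φ j)) 0, Lp.coeFn_neg (φ j), Lp.coeFn_zero ℝ q μ]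
      with t ha hb hc
    rw [ha, Pi.sup_apply, hb, Pi.neg_apply, hc, Pi.zero_apply]
  have h3 : ∀ᵐ t ∂μ, ∀ j : Fin k, j ≠ i → min |φ i t| |φ j t| = 0 := by
    rw [ae_all_iff]
    intro j
    rcases eq_or_ne j i with rfl | hj
    · exact Filter.Eventually.of_forall fun t h => absurd rfl h
    · have h0 : ⇑(|φ i| ⊓ |φ j|) =ᵐ[μ] fun _ => (0:ℝ) := by
        rw [hd j hj]
        filter_upwards [Lp.coeFn_zero ℝ q μ] with t ht using ht
      filter_upwards [h0, Lp.coeFn_inf |φ i| |φ j|, Lp.coeFn_abs (φ i), Lp.coeFn_abs (φ j)]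
        with t ha hb hc hd'
      intro _
      rw [← hc, ← hd']
      have : (|φ i| ⊓ |φ j|) t = min ((|φ i|) t) ((|φ j|) t) := by rw [hb]; rfl
      rw [← this, ha]
  filter_upwards [h1, h2, h3, coeFn_Vlp g (φ i)] with t ht1 ht2 ht3 ht4
  rw [Pi.zero_apply, ht4]
  unfold Vfun sgnFun
  have hgt : g t = ∑ j : Fin k, max (-(φ j t)) 0 := by
    rw [ht1]; exact Finset.sum_congr rfl fun j _ => ht2 j
  by_cases hz : g t = 0
  · rw [if_pos hz]
    have hterm : max (-(φ i t)) 0 = 0 :=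
      (Finset.sum_eq_zero_iff_of_nonneg fun j _ => le_max_right _ _).mp
        (show ∑ j : Fin k, max (-(φ j t)) 0 = 0 by rwa [hgt] at hz) i (Finset.mem_univ i)
    have hle : -(φ i t) ≤ 0 := by
      have := le_max_left (-(φ i t)) 0; rwa [hterm] at this
    linarith
  · rw [if_neg hz]
    rw [hgt] at hz
    obtain ⟨j, hj0⟩ : ∃ j, max (-(φ j t)) 0 ≠ 0 := by
      by_contra hall
      push_neg at hall
      exact hz (Finset.sum_eq_zero fun j _ => hall j)
    have hjneg : φ j t < 0 := by
      by_contra hge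
      push_neg at hge
      exact hj0 (max_eq_right (by linarith))
    rcases eq_or_ne j i with rfl | hne
    · nlinarith
    · have hmin := ht3 j hne
      have hzero : φ i t = 0 := by
        by_contra h0
        have hpos : 0 < |φ i t| := abs_pos.mpr h0
        have hpos' : 0 < |φ j t| := abs_pos.mpr hjneg.ne
        have := lt_min hpos hpos'
        rw [hmin] at this
        exact lt_irrefl 0 this
      rw [hzero]
      simp

lemma eLpNorm_tendsto_zero_of_dominated (hq' : q ≠ ∞) {F : ℕ → α → ℝ} {bound : α → ℝ}
    (hF : ∀ n, AEStronglyMeasurable (F n) μ)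
    (hbound : MemLp bound q μ)
    (hdom : ∀ n, ∀ᵐ t ∂μ, ‖F n t‖ ≤ bound t)
    (hlim : ∀ᵐ t ∂μ, Tendsto (fun n => F n t) atTop (𝓝 (0:ℝ))) :
    Tendsto (fun n => eLpNorm (F n) q μ) atTop (𝓝 0) := by
  have hq0 : q ≠ 0 := fact_ne_zero q
  have hr : 0 < q.toReal := ENNReal.toReal_pos hq0 hq'
  have key : Tendsto (fun n => ∫⁻ t, (‖F n t‖₊ : ℝ≥0∞) ^ q.toReal ∂μ) atTop (𝓝 0) := by
    have h0 : (𝓝 (0:ℝ≥0∞)) = 𝓝 (∫⁻ (_t : α), (fun t => (0:ℝ≥0∞)) _t ∂μ) := by simp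
    rw [h0]
    apply tendsto_lintegral_of_dominated_convergence' (fun t => (‖bound t‖₊ : ℝ≥0∞) ^ q.toReal)
    · exact fun n =>
        (ENNReal.continuous_rpow_const.measurable).comp_aemeasurable (hF n).enorm
    · intro n
      filter_upwards [hdom n] with t ht
      have h1 : ‖F n t‖ ≤ ‖bound t‖ := ht.trans (le_abs_self _)
      exact ENNReal.rpow_le_rpow (ENNReal.coe_le_coe.mpr (by exact_mod_cast h1)) hr.le
    · exact (lintegral_rpow_enorm_lt_top_of_eLpNorm_lt_top hq0 hq' hbound.2).ne
    · filter_upwards [hlim] with t ht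
      have h1 : Tendsto (fun n => (‖F n t‖₊ : ℝ≥0∞)) atTop (𝓝 0) := by
        rw [← ENNReal.coe_zero]
        refine ENNReal.tendsto_coe.mpr ?_
        have : Tendsto (fun n => ‖F n t‖₊) atTop (𝓝 (‖(0:ℝ)‖₊)) :=
          (continuous_nnnorm.tendsto (0:ℝ)).comp ht
        simpa using this
      have := h1.ennrpow_const q.toReal
      rwa [ENNReal.zero_rpow_of_pos hr] at this
  have h2 := key.ennrpow_const (1 / q.toReal)
  rw [ENNReal.zero_rpow_of_pos (by positivity)] at h2
  refine Tendsto.congr (fun n => ?_) h2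
  exact (eLpNorm_eq_lintegral_rpow_enorm_toReal (f := F n) hq0 hq').symm

/-- Approximations to `Vlp`, jointly continuous in `(g, φ)`. -/
def Phi (n : ℕ) (g φ : Lp ℝ q μ) : Lp ℝ q μ :=
  φ - (2:ℝ) • ((φ ⊔ 0) ⊓ (n:ℝ) • |g| - ((-φ) ⊔ 0) ⊓ (n:ℝ) • |g|)

lemma continuous_Phi (n : ℕ) :
    Continuous fun x : Lp ℝ q μ × Lp ℝ q μ => Phi n x.1 x.2 := by
  unfold Phi
  have habs : Continuous fun x : Lp ℝ q μ × Lp ℝ q μ => |x.1| := by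
    have : (fun x : Lp ℝ q μ × Lp ℝ q μ => |x.1|) = fun x => x.1 ⊔ -x.1 := by
      funext x; rw [abs]
    rw [this]; exact continuous_fst.sup continuous_fst.neg
  refine continuous_snd.sub (Continuous.fun_const_smul ?_ _)
  refine Continuous.sub ?_ ?_
  · exact ((continuous_snd.sup continuous_const).inf (habs.fun_const_smul _))
  · exact ((continuous_snd.neg.sup continuous_const).inf (habs.fun_const_smul _))

lemma coeFn_Phi (n : ℕ) (g φ : Lp ℝ q μ) :
    ⇑(Phi n g φ) =ᵐ[μ] fun t =>
      φ t - 2 * (min (max (φ t) 0) ((n:ℝ) * |g t|)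
        - min (max (-(φ t)) 0) ((n:ℝ) * |g t|)) := by
  have hng : ⇑((n:ℝ) • |g|) =ᵐ[μ] fun t => (n:ℝ) * |g t| := by
    filter_upwards [Lp.coeFn_smul (n:ℝ) |g|, Lp.coeFn_abs g] with t h1 h2
    rw [h1, Pi.smul_apply, h2]; rfl
  have h1 : ⇑((φ ⊔ 0) ⊓ (n:ℝ) • |g|) =ᵐ[μ] fun t => min (max (φ t) 0) ((n:ℝ) * |g t|) := by
    filter_upwards [Lp.coeFn_inf (φ ⊔ 0) ((n:ℝ) • |g|), Lp.coeFn_sup φ 0,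
      Lp.coeFn_zero ℝ q μ, hng] with t ha hb hc hd
    rw [ha, Pi.inf_apply, hb, Pi.sup_apply, hc, hd]; rfl
  have h2 : ⇑(((-φ) ⊔ 0) ⊓ (n:ℝ) • |g|) =ᵐ[μ]
      fun t => min (max (-(φ t)) 0) ((n:ℝ) * |g t|) := by
    filter_upwards [Lp.coeFn_inf ((-φ) ⊔ 0) ((n:ℝ) • |g|), Lp.coeFn_sup (-φ) 0,
      Lp.coeFn_zero ℝ q μ, hng, Lp.coeFn_neg φ] with t ha hb hc hd he
    rw [ha, Pi.inf_apply, hb, Pi.sup_apply, hc, hd, he]; rfl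
  unfold Phi
  filter_upwards [Lp.coeFn_sub φ ((2:ℝ) • ((φ ⊔ 0) ⊓ (n:ℝ) • |g| - ((-φ) ⊔ 0) ⊓ (n:ℝ) • |g|)),
    Lp.coeFn_smul (2:ℝ) ((φ ⊔ 0) ⊓ (n:ℝ) • |g| - ((-φ) ⊔ 0) ⊓ (n:ℝ) • |g|),
    Lp.coeFn_sub ((φ ⊔ 0) ⊓ (n:ℝ) • |g|) (((-φ) ⊔ 0) ⊓ (n:ℝ) • |g|), h1, h2]
    with t ha hb hc hd he
  rw [ha, Pi.sub_apply, hb, Pi.smul_apply, hc, Pi.sub_apply, hd, he]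
  simp only [smul_eq_mul, Pi.neg_apply]

/-- The pointwise real limit computation. -/
lemma real_limit (a b : ℝ) (hb : 0 ≤ b) :
    Tendsto (fun n : ℕ => a - 2 * (min (max a 0) ((n:ℝ) * b)
      - min (max (-a) 0) ((n:ℝ) * b))) atTop
      (𝓝 ((if b = 0 then 1 else -1) * a)) := by
  rcases eq_or_ne b 0 with hb0 | hb0
  · rw [if_pos hb0]
    have : (fun n : ℕ => a - 2 * (min (max a 0) ((n:ℝ) * b)
        - min (max (-a) 0) ((n:ℝ) * b))) = fun _ => 1 * a := by
      funext n
      rw [hb0, mul_zero, min_eq_right (le_max_right a 0), min_eq_right (le_max_right (-a) 0)]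
      ring
    rw [this]
    exact tendsto_const_nhds
  · have hbpos : 0 < b := lt_of_le_of_ne hb (Ne.symm hb0)
    rw [if_neg hb0]
    apply Tendsto.congr' _ (tendsto_const_nhds (x := -1 * a))
    rw [EventuallyEq, eventually_atTop]
    refine ⟨⌈|a| / b⌉₊, fun n hn => ?_⟩
    have h1 : |a| ≤ (n:ℝ) * b := by
      rw [← div_le_iff₀ hbpos]
      exact (Nat.le_ceil _).trans (by exact_mod_cast hn)
    have h2 : min (max a 0) ((n:ℝ) * b) = max a 0 :=
      min_eq_left ((max_le (le_abs_self a) (abs_nonneg a)).trans h1)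
    have h3 : min (max (-a) 0) ((n:ℝ) * b) = max (-a) 0 :=
      min_eq_left ((max_le (neg_le_abs a) (abs_nonneg a)).trans h1)
    rw [h2, h3]
    rcases le_total a 0 with ha | ha
    · rw [max_eq_right ha, max_eq_left (by linarith)]; ring
    · rw [max_eq_left ha, max_eq_right (by linarith)]; ring

lemma tendsto_Phi (hq' : q ≠ ∞) (g φ : Lp ℝ q μ) :
    Tendsto (fun n => Phi n g φ) atTop (𝓝 (Vlp g φ)) := by
  have hmem := memℒp_Vfun g φ
  have key : Tendsto (fun n => eLpNorm (⇑(Phi n g φ) - Vfun g φ) q μ) atTop (𝓝 0) := by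
    apply eLpNorm_tendsto_zero_of_dominated hq' (bound := fun t => 4 * |φ t|)
    · exact fun n => (Lp.aestronglyMeasurable _).sub hmem.aestronglyMeasurable
    · exact ((Lp.memLp φ).abs).const_mul 4
    · intro n
      filter_upwards [coeFn_Phi n g φ] with t ht
      rw [Pi.sub_apply, ht]
      have hc : (0:ℝ) ≤ (n:ℝ) * |g t| := by positivity
      have hm1a : 0 ≤ min (max (φ t) 0) ((n:ℝ) * |g t|) := le_min (le_max_right _ _) hc
      have hm1b : min (max (φ t) 0) ((n:ℝ) * |g t|) ≤ |φ t| :=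
        (min_le_left _ _).trans (max_le (le_abs_self _) (abs_nonneg _))
      have hm2a : 0 ≤ min (max (-(φ t)) 0) ((n:ℝ) * |g t|) := le_min (le_max_right _ _) hc
      have hm2b : min (max (-(φ t)) 0) ((n:ℝ) * |g t|) ≤ |φ t| :=
        (min_le_left _ _).trans (max_le (neg_le_abs _) (abs_nonneg _))
      have ha1 : φ t ≤ |φ t| := le_abs_self _
      have ha2 : -(φ t) ≤ |φ t| := neg_le_abs _
      rw [Real.norm_eq_abs]
      unfold Vfun sgnFun
      split <;> (rw [abs_le]; constructor <;> linarith)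
    · filter_upwards [ae_all_iff.mpr fun n => coeFn_Phi n g φ] with t ht
      have hlim := real_limit (φ t) |g t| (abs_nonneg _)
      have hL : Vfun g φ t = (if |g t| = 0 then 1 else -1) * φ t := by
        unfold Vfun sgnFun
        simp only [abs_eq_zero]
      have h2 : Tendsto (fun n => ⇑(Phi n g φ) t) atTop
          (𝓝 ((if |g t| = 0 then 1 else -1) * φ t)) := by
        refine hlim.congr fun n => ?_
        rw [ht n]
      have h3 := h2.sub (tendsto_const_nhds
        (x := (if |g t| = 0 then (1:ℝ) else -1) * φ t))
      rw [sub_self] at h3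
      refine h3.congr fun n => ?_
      rw [Pi.sub_apply, hL]
  exact Lp.tendsto_Lp_of_tendsto_eLpNorm _ hmem key

lemma aesm_of_continuous_approx {β : Type*} [MeasurableSpace β] {ν : Measure β}
    {E : Type*} [NormedAddCommGroup E]
    (u h : β → E) (hu : AEStronglyMeasurable u ν) (hh : AEStronglyMeasurable h ν)
    (F : ℕ → E × E → E) (hF : ∀ n, Continuous (F n)) (G : β → E)
    (hG : ∀ s, Filter.Tendsto (fun n => F n (u s, h s)) atTop (𝓝 (G s))) :
    AEStronglyMeasurable G ν := by
  refine aestronglyMeasurable_of_tendsto_ae atTop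
    (f := fun n s => F n (u s, h s)) (fun n => ?_)
    (Filter.Eventually.of_forall hG)
  exact (hF n).comp_aestronglyMeasurable (hu.prodMk hh)

section Elevel

variable {β : Type*} [MeasurableSpace β] {ν : Measure β} {p : ℝ≥0∞} [Fact (1 ≤ p)]

def Wfun (u h : Lp (Lp ℝ q μ) p ν) : β → Lp ℝ q μ := fun s => Vlp (u s) (h s)

lemma memℒp_Wfun (hq' : q ≠ ∞) (u h : Lp (Lp ℝ q μ) p ν) : MemLp (Wfun u h) p ν := by
  have hsm : AEStronglyMeasurable (Wfun u h) ν :=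
    aesm_of_continuous_approx _ _ (Lp.aestronglyMeasurable u) (Lp.aestronglyMeasurable h)
      (fun n x => Phi n x.1 x.2) continuous_Phi _
      (fun s => tendsto_Phi hq' (u s) (h s))
  refine ((Lp.memLp h).norm).of_le hsm (Filter.Eventually.of_forall fun s => ?_)
  simp only [Wfun, norm_Vlp, norm_norm, le_refl]

def Wlp (hq' : q ≠ ∞) (u h : Lp (Lp ℝ q μ) p ν) : Lp (Lp ℝ q μ) p ν :=
  (memℒp_Wfun hq' u h).toLp _

lemma coeFn_Wlp (hq' : q ≠ ∞) (u h : Lp (Lp ℝ q μ) p ν) :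
    ⇑(Wlp hq' u h) =ᵐ[ν] Wfun u h :=
  MemLp.coeFn_toLp _

lemma Wlp_add (hq' : q ≠ ∞) (u h₁ h₂ : Lp (Lp ℝ q μ) p ν) :
    Wlp hq' u (h₁ + h₂) = Wlp hq' u h₁ + Wlp hq' u h₂ := by
  refine Lp.ext ?_
  filter_upwards [coeFn_Wlp hq' u (h₁ + h₂), coeFn_Wlp hq' u h₁, coeFn_Wlp hq' u h₂,
    Lp.coeFn_add h₁ h₂, Lp.coeFn_add (Wlp hq' u h₁) (Wlp hq' u h₂)] with s ha hb hc hd he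
  rw [ha, he, Pi.add_apply, hb, hc]
  simp only [Wfun]
  rw [hd, Pi.add_apply, Vlp_add]

lemma Wlp_smul (hq' : q ≠ ∞) (u : Lp (Lp ℝ q μ) p ν) (c : ℝ) (h : Lp (Lp ℝ q μ) p ν) :
    Wlp hq' u (c • h) = c • Wlp hq' u h := by
  refine Lp.ext ?_
  filter_upwards [coeFn_Wlp hq' u (c • h), coeFn_Wlp hq' u h,
    Lp.coeFn_smul c h, Lp.coeFn_smul c (Wlp hq' u h)] with s ha hb hc hd
  rw [ha, hd, Pi.smul_apply, hb]
  simp only [Wfun]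
  rw [hc, Pi.smul_apply, Vlp_smul]

lemma norm_Wlp (hq' : q ≠ ∞) (u h : Lp (Lp ℝ q μ) p ν) : ‖Wlp hq' u h‖ = ‖h‖ := by
  rw [Wlp, Lp.norm_toLp, Lp.norm_def]
  congr 1
  exact eLpNorm_congr_norm_ae
    (Filter.Eventually.of_forall fun s => by simp only [Wfun, norm_Vlp])

lemma Wlp_invol (hq' : q ≠ ∞) (u h : Lp (Lp ℝ q μ) p ν) :
    Wlp hq' u (Wlp hq' u h) = h := by
  refine Lp.ext ?_
  filter_upwards [coeFn_Wlp hq' u (Wlp hq' u h), coeFn_Wlp hq' u h] with s h1 h2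
  rw [h1]
  simp only [Wfun]
  rw [h2]
  simp only [Wfun, Vlp_invol]

/-- The isometric involution of `Lp(Lq)` determined by `u`. -/
def Wequiv (hq' : q ≠ ∞) (u : Lp (Lp ℝ q μ) p ν) :
    Lp (Lp ℝ q μ) p ν ≃ₗᵢ[ℝ] Lp (Lp ℝ q μ) p ν where
  toFun := Wlp hq' u
  invFun := Wlp hq' u
  map_add' := Wlp_add hq' u
  map_smul' := Wlp_smul hq' u
  left_inv := Wlp_invol hq' u
  right_inv := Wlp_invol hq' u
  norm_map' := norm_Wlp hq' u

lemma Wequiv_apply (hq' : q ≠ ∞) (u h : Lp (Lp ℝ q μ) p ν) :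
    Wequiv hq' u h = Wlp hq' u h := rfl

end Elevel

end DTN


/-- Pairwise disjoint elements of `L_p(L_q)` can be simultaneously turned into
nonnegative ones by a surjective linear isometry. -/
theorem disjoint_turn_nonneg (p q : ℝ≥0∞) [Fact (1 ≤ p)] [Fact (1 ≤ q)]
    (hp : p ≠ ∞) (hq : q ≠ ∞) (k : ℕ) (f : Fin k → LpLqSp p q)
    (hdisj : ∀ i j : Fin k, i ≠ j → |f i| ⊓ |f j| = 0) :
    ∃ U : LpLqSp p q ≃ₗᵢ[ℝ] LpLqSp p q, ∀ i, 0 ≤ U (f i) := by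
  classical
  set u : LpLqSp p q := ∑ j : Fin k, ((-(f j)) ⊔ 0) with hu
  refine ⟨DTN.Wequiv hq u, fun i => ?_⟩
  rw [DTN.Wequiv_apply, ← MeasureTheory.Lp.coeFn_nonneg]
  have h1 : ⇑u =ᵐ[(volume : Measure I01)] fun s => ∑ j : Fin k, ((-(f j)) ⊔ 0) s :=
    DTN.coeFn_sum Finset.univ fun j => (-(f j)) ⊔ 0
  have h2 : ∀ᵐ s ∂(volume : Measure I01), ∀ j : Fin k,
      ((-(f j)) ⊔ 0) s = (-(f j s)) ⊔ 0 := by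
    rw [ae_all_iff]
    intro j
    filter_upwards [MeasureTheory.Lp.coeFn_sup (-(f j)) 0, MeasureTheory.Lp.coeFn_neg (f j),
      MeasureTheory.Lp.coeFn_zero (LqSp q) p (volume : Measure I01)] with s ha hb hc
    rw [ha, Pi.sup_apply, hb, Pi.neg_apply, hc, Pi.zero_apply]
  have h3 : ∀ᵐ s ∂(volume : Measure I01), ∀ j j' : Fin k, j ≠ j' →
      |f j s| ⊓ |f j' s| = 0 := by
    rw [ae_all_iff]
    intro j
    rw [ae_all_iff]
    intro j'
    rcases eq_or_ne j j' with rfl | hjj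
    · exact Filter.Eventually.of_forall fun s h => absurd rfl h
    · have h0 : ⇑(|f j| ⊓ |f j'|) =ᵐ[(volume : Measure I01)] fun _ => (0 : LqSp q) := by
        rw [hdisj j j' hjj]
        filter_upwards [MeasureTheory.Lp.coeFn_zero (LqSp q) p (volume : Measure I01)]
          with s hs using hs
      filter_upwards [h0, MeasureTheory.Lp.coeFn_inf |f j| |f j'|,
        MeasureTheory.Lp.coeFn_abs (f j), MeasureTheory.Lp.coeFn_abs (f j')]
        with s ha hb hc hd
      intro _
      rw [← hc, ← hd]
      have : (|f j| ⊓ |f j'|) s = (|f j|) s ⊓ (|f j'|) s := by rw [hb]; rfl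
      rw [← this, ha]
  filter_upwards [h1, h2, h3, DTN.coeFn_Wlp hq u (f i)] with s hs1 hs2 hs3 hs4
  rw [Pi.zero_apply, hs4]
  have hus : u s = ∑ j : Fin k, ((-(f j s)) ⊔ 0) := by
    rw [hs1]
    exact Finset.sum_congr rfl fun j _ => hs2 j
  show (0 : LqSp q) ≤ DTN.Vlp (u s) (f i s)
  rw [hus]
  exact DTN.Vlp_nonneg_of (fun j => f j s) i fun j hj => hs3 i j hj.symm
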